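/- Let G be a group acting on a tree T (simplicially, without inversions). If P is a finite p-subgroup of G and all vertex stabilizers of the action are finite groups, with a vertex v_* such that for every vertex v the edge group on the path toward v_* has p'-index in the stabilizer of v (the setup of a tree of finite groups satisfying hypothesis (H)), then some conjugate of P lies in the stabilizer of v_*. Consequently, a Sylow p-subgroup of the stabilizer of v_* is a Sylow p-subgroup of the fundamental group of the tree of groups. -/

import Mathlib

namespace Stmt3Aux

variable {V : Type*} {T : SimpleGraph V} {G : Type*} [Group G] [MulAction G V]

lemma getVert_map (f : T →g T) {u v : V} (p : T.Walk u v) (i : ℕ) :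
    (p.map f).getVert i = f (p.getVert i) := by
  induction p generalizing i with
  | nil => rfl
  | cons h q ih =>
    cases i with
    | zero => rfl
    | succ n => simpa using ih n

lemma smul_dist_le (hact : ∀ (g : G) (u v : V), T.Adj u v → T.Adj (g • u) (g • v))
    (hc : T.Connected) (g : G) (u v : V) :
    T.dist (g • u) (g • v) ≤ T.dist u v := by
  obtain ⟨q, hq⟩ := (hc.preconnected u v).exists_walk_length_eq_dist
  have := SimpleGraph.dist_le (q.map ⟨fun a => g • a, fun h => hact g _ _ h⟩)
  rwa [SimpleGraph.Walk.length_map, hq] at this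

lemma length_eq_dist (hT : T.IsTree) {u v : V} (p : T.Walk u v) (hp : p.IsPath) :
    p.length = T.dist u v := by
  classical
  obtain ⟨q, hq⟩ := (hT.isConnected.preconnected u v).exists_walk_length_eq_dist
  have h1 : q.bypass.length = T.dist u v :=
    le_antisymm (hq ▸ q.length_bypass_le) (SimpleGraph.dist_le _)
  rw [(hT.existsUnique_path u v).unique hp q.bypass_isPath, h1]

lemma dist_getVert_le (hc : T.Connected) {u v : V} (p : T.Walk u v) :
    ∀ i j, i ≤ j → T.dist (p.getVert i) (p.getVert j) ≤ j - i := by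
  induction p with
  | nil => intro i j _; simp [SimpleGraph.Walk.getVert, SimpleGraph.dist_self]
  | @cons x y z h q ih =>
    intro i j hij
    cases i with
    | succ n =>
      cases j with
      | zero => omega
      | succ m =>
        rw [SimpleGraph.Walk.getVert_cons_succ, SimpleGraph.Walk.getVert_cons_succ]
        simpa using ih n m (by omega)
    | zero =>
      cases j with
      | zero => simp
      | succ m =>
        have h1 : T.dist x y ≤ 1 := by
          simpa using SimpleGraph.dist_le h.toWalk
        have h2 : T.dist y (q.getVert m) ≤ m := by
          simpa using ih 0 m (by omega)
        calc T.dist ((SimpleGraph.Walk.cons h q).getVert 0) ((SimpleGraph.Walk.cons h q).getVert (m+1))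
            = T.dist x (q.getVert m) := by
              rw [SimpleGraph.Walk.getVert_zero, SimpleGraph.Walk.getVert_cons_succ]
          _ ≤ T.dist x y + T.dist y (q.getVert m) := hc.dist_triangle
          _ ≤ m + 1 - 0 := by omega

lemma getVert_dist (hT : T.IsTree) {u v : V} (p : T.Walk u v) (hp : p.IsPath) {i j : ℕ}
    (hij : i ≤ j) (hj : j ≤ p.length) :
    T.dist (p.getVert i) (p.getVert j) = j - i := by
  have hc := hT.isConnected
  have h1 := dist_getVert_le hc p 0 i (by omega)
  have h2 := dist_getVert_le hc p i j hij
  have h3 := dist_getVert_le hc p j p.length hj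
  rw [SimpleGraph.Walk.getVert_zero] at h1
  rw [SimpleGraph.Walk.getVert_length] at h3
  have e : T.dist u v = p.length := (length_eq_dist hT p hp).symm
  have t1 : T.dist u v ≤ T.dist u (p.getVert i) + T.dist (p.getVert i) (p.getVert j)
      + T.dist (p.getVert j) v :=
    le_trans hc.dist_triangle (by gcongr; exact hc.dist_triangle)
  omega




lemma smul_getVert_eq (hT : T.IsTree)
    (hact : ∀ (g : G) (u v : V), T.Adj u v → T.Adj (g • u) (g • v))
    {x : G} {u v : V} (hu : x • u = u) (hv : x • v = v)
    (p : T.Walk u v) (hp : p.IsPath) (i : ℕ) :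
    x • p.getVert i = p.getVert i := by
  let f : T →g T := ⟨fun a => x • a, fun h => hact x _ _ h⟩
  have hinj : Function.Injective f := MulAction.injective x
  have hq : ((p.map f).copy hu hv).IsPath := by
    rw [SimpleGraph.Walk.isPath_copy]
    exact p.map_isPath_of_injective hinj hp
  have heq : (p.map f).copy hu hv = p := (hT.existsUnique_path u v).unique hq hp
  conv_rhs => rw [← heq]
  rw [SimpleGraph.Walk.getVert_copy, getVert_map]
  rfl

lemma getVert_one_takeUntil [DecidableEq V] {u v z : V} (p : T.Walk u v)
    (hz : z ∈ p.support) (hne : z ≠ u) :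
    (p.takeUntil z hz).getVert 1 = p.getVert 1 := by
  have hlen : (p.takeUntil z hz).length ≠ 0 := fun h =>
    hne (SimpleGraph.Walk.eq_of_length_eq_zero h).symm
  conv_rhs => rw [← SimpleGraph.Walk.take_spec p hz]
  rw [SimpleGraph.Walk.getVert_append]
  by_cases h1 : 1 < (p.takeUntil z hz).length
  · rw [if_pos h1]
  · have h2 : (p.takeUntil z hz).length = 1 := by omega
    have h3 : (p.takeUntil z hz).getVert 1 = z := by
      conv_lhs => rw [← h2]
      exact SimpleGraph.Walk.getVert_length _
    rw [if_neg h1, h2, h3, Nat.sub_self, SimpleGraph.Walk.getVert_zero]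

lemma glue (hT : T.IsTree) {a u w : V} (p : T.Walk a u) (q : T.Walk a w)
    (hp : p.IsPath) (hq : q.IsPath) (h1 : p.getVert 1 ≠ q.getVert 1) :
    (p.reverse.append q).IsPath := by
  classical
  have key : ∀ z, z ∈ p.support → z ∈ q.support → z = a := by
    intro z hzp hzq
    by_contra hza
    have e1 : p.takeUntil z hzp = q.takeUntil z hzq :=
      (hT.existsUnique_path a z).unique (hp.takeUntil hzp) (hq.takeUntil hzq)
    exact h1 (by rw [← getVert_one_takeUntil p hzp hza, ← getVert_one_takeUntil q hzq hza, e1])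
  rw [SimpleGraph.Walk.isPath_def, SimpleGraph.Walk.support_append]
  apply List.Nodup.append
  · exact hp.reverse.support_nodup
  · exact hq.support_nodup.tail
  · intro z hz1 hz2
    have hzp : z ∈ p.support := by
      rwa [SimpleGraph.Walk.support_reverse, List.mem_reverse] at hz1
    have hzq : z ∈ q.support := List.mem_of_mem_tail hz2
    obtain rfl := key z hzp hzq
    have hnd := hq.support_nodup
    rw [q.support_eq_cons] at hnd
    exact (List.nodup_cons.mp hnd).1 hz2



lemma exists_smul_fixed (hT : T.IsTree)
    (hact : ∀ (g : G) (u v : V), T.Adj u v → T.Adj (g • u) (g • v))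
    (hnoinv : ∀ (g : G) (u v : V), T.Adj u v → g • u = v → g • v ≠ u)
    (S : Set V) (hS : S.Nonempty)
    (hconv : ∀ ⦃u v : V⦄, u ∈ S → v ∈ S → ∀ (r : T.Walk u v), r.IsPath → ∀ i, r.getVert i ∈ S)
    (t : G) (htS : ∀ v ∈ S, t • v ∈ S) {n : ℕ} (hn : n ≠ 0) (htn : t ^ n = 1) :
    ∃ v ∈ S, t • v = v := by
  classical
  have hdne : ((fun v => T.dist v (t • v)) '' S).Nonempty := hS.image _
  obtain ⟨v, hvS, hvD⟩ := Nat.sInf_mem hdne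
  set D := sInf ((fun v => T.dist v (t • v)) '' S) with hDdef
  by_cases hD0 : T.dist v (t • v) = 0
  · exact ⟨v, hvS, ((hT.isConnected.dist_eq_zero_iff).mp hD0).symm⟩
  exfalso
  have hmin : ∀ u ∈ S, D ≤ T.dist u (t • u) := fun u hu => Nat.sInf_le ⟨u, hu, rfl⟩
  have hvD' : T.dist v (t • v) = D := hvD
  rw [hvD'] at hD0
  have hD1 : 1 ≤ D := Nat.pos_of_ne_zero hD0
  obtain ⟨γ, hγpath, -⟩ := (hT.existsUnique_path v (t • v))
  have hl : γ.length = D := by rw [length_eq_dist hT γ hγpath, hvD']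
  set b := γ.getVert 1 with hbdef
  set a := γ.getVert (D - 1) with hadef
  have htvS : t • v ∈ S := htS v hvS
  have hbS : b ∈ S := hconv hvS htvS γ hγpath 1
  have hadj0 : T.Adj v b := by
    have := γ.adj_getVert_succ (i := 0) (by omega)
    simpa [hbdef] using this
  by_cases hcase : t • b = a
  · by_cases hD1' : D = 1
    · have hb : b = t • v := by
        rw [hbdef, show (1:ℕ) = γ.length by omega, SimpleGraph.Walk.getVert_length]
      have ha : a = v := by
        rw [hadef, hD1']; simpa using γ.getVert_zero
      refine hnoinv t v (t • v) (hb ▸ hadj0) rfl ?_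
      rw [← hb, hcase, ha]
    · have h2 : 2 ≤ D := by omega
      have hba : T.dist b a = D - 2 := by
        have := getVert_dist hT γ hγpath (i := 1) (j := D - 1) (by omega) (by omega)
        rw [← hbdef, ← hadef] at this
        rw [this]
        omega
      have hlt : T.dist b (t • b) < D := by rw [hcase, hba]; omega
      exact absurd (hmin b hbS) (by omega)
  · have main : ∀ k : ℕ, 1 ≤ k → ∃ ρ : T.Walk v (t ^ k • v), ρ.IsPath ∧ ρ.length = k * D ∧
        ρ.getVert (k * D - 1) = t ^ (k - 1) • a := by
      intro k hk
      induction k with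
      | zero => omega
      | succ m ih =>
        by_cases hm : m = 0
        · subst hm
          refine ⟨γ.copy rfl (by rw [pow_one]), ?_, ?_, ?_⟩
          · rwa [SimpleGraph.Walk.isPath_copy]
          · rw [SimpleGraph.Walk.length_copy, hl]; ring
          · rw [SimpleGraph.Walk.getVert_copy]
            have h01 : (0 + 1) * D - 1 = D - 1 := by omega
            rw [h01, show (0:ℕ) + 1 - 1 = 0 from rfl, pow_zero, one_smul, ← hadef]
        · obtain ⟨ρ, hρp, hρl, hρa⟩ := ih (by omega)
          let f : T →g T := ⟨fun x => t ^ m • x, fun h => hact _ _ _ h⟩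
          have hcast : t ^ m • (t • v) = t ^ (m + 1) • v := by
            rw [← mul_smul, ← pow_succ]
          let β : T.Walk (t ^ m • v) (t ^ (m + 1) • v) := (γ.map f).copy rfl hcast
          have hβp : β.IsPath := by
            rw [SimpleGraph.Walk.isPath_copy]
            exact γ.map_isPath_of_injective (MulAction.injective (t ^ m)) hγpath
          have hβl : β.length = D := by
            simp only [β, SimpleGraph.Walk.length_copy, SimpleGraph.Walk.length_map, hl]
          have hβ1 : β.getVert 1 = t ^ m • b := by
            simp only [β, SimpleGraph.Walk.getVert_copy, getVert_map, ← hbdef]; rfl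
          have hβa : β.getVert (D - 1) = t ^ m • a := by
            simp only [β, SimpleGraph.Walk.getVert_copy, getVert_map, ← hadef]; rfl
          have hne2 : ρ.reverse.getVert 1 ≠ β.getVert 1 := by
            rw [SimpleGraph.Walk.getVert_reverse, hρl, hβ1]
            intro hEq
            apply hcase
            have hm1 : m = (m - 1) + 1 := by omega
            rw [hρa, hm1, pow_succ, mul_smul] at hEq
            have := smul_left_cancel (t ^ (m - 1)) hEq
            rw [← this]
          have hglue := glue hT ρ.reverse β hρp.reverse hβp hne2
          rw [SimpleGraph.Walk.reverse_reverse] at hglue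
          refine ⟨ρ.append β, hglue, ?_, ?_⟩
          · rw [SimpleGraph.Walk.length_append, hρl, hβl]; ring
          · rw [SimpleGraph.Walk.getVert_append]
            have hms : (m + 1) * D = m * D + D := by ring
            rw [if_neg (by rw [hρl, hms]; omega), hρl, hms,
              show m * D + D - 1 - m * D = D - 1 by omega, hβa,
              show m + 1 - 1 = m from rfl]
    obtain ⟨ρ, hρp, hρl, -⟩ := main n (Nat.one_le_iff_ne_zero.mpr hn)
    have hvv : t ^ n • v = v := by rw [htn, one_smul]
    have h0 : (ρ.copy rfl hvv).length = 0 := by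
      rw [length_eq_dist hT _ (by rwa [SimpleGraph.Walk.isPath_copy]),
        SimpleGraph.dist_self]
    rw [SimpleGraph.Walk.length_copy, hρl] at h0
    rcases Nat.mul_eq_zero.mp h0 with h | h
    · exact hn h
    · omega

theorem exists_fixed_vertex (hT : T.IsTree)
    (hact : ∀ (g : G) (u v : V), T.Adj u v → T.Adj (g • u) (g • v))
    (hnoinv : ∀ (g : G) (u v : V), T.Adj u v → g • u = v → g • v ≠ u)
    (v0 : V) (p : ℕ) [Fact p.Prime] :
    ∀ (N : ℕ) (H : Subgroup G), Finite H → Nat.card H ≤ N → IsPGroup p H →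
      ∃ v : V, ∀ x ∈ H, x • v = v := by
  intro N
  induction N with
  | zero =>
    intro H hF hcard _
    haveI := hF
    exact absurd hcard (by have : 0 < Nat.card H := Nat.card_pos; omega)
  | succ N ih =>
    intro H hF hcard hpH
    haveI := hF
    by_cases hHbot : H = ⊥
    · refine ⟨v0, ?_⟩
      intro x hx
      rw [hHbot, Subgroup.mem_bot] at hx
      rw [hx, one_smul]
    rcases Nat.lt_or_ge (Nat.card H) (N + 1) with hlt | hge
    · exact ih H hF (by omega) hpH
    have hcardH : Nat.card H = N + 1 := le_antisymm hcard hge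
    haveI : Nontrivial ↥H := (Subgroup.nontrivial_iff_ne_bot H).mpr hHbot
    haveI : Finite (Subgroup ↥H) :=
      Finite.of_injective (fun K : Subgroup ↥H => (K : Set ↥H)) SetLike.coe_injective
    have hbotne : (⊥ : Subgroup ↥H) ≠ ⊤ := by
      intro h
      obtain ⟨x, hx⟩ := exists_ne (1 : ↥H)
      exact hx (by simpa using (h ▸ Subgroup.mem_top x : x ∈ (⊥ : Subgroup ↥H)))
    obtain ⟨K', hK'coatom, -⟩ :=
      ((Finite.to_isCoatomic (α := Subgroup ↥H)).eq_top_or_exists_le_coatom ⊥).resolve_left hbotne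
    haveI : Group.IsNilpotent ↥H := hpH.isNilpotent
    have hK'norm : K'.Normal :=
      Subgroup.NormalizerCondition.normal_of_coatom K' normalizerCondition_of_isNilpotent hK'coatom
    set K : Subgroup G := K'.map H.subtype with hKdef
    have hKH : K ≤ H := by
      rintro x ⟨k, hk, rfl⟩
      exact (k : ↥H).2
    have eK : ↥K' ≃* ↥K := K'.equivMapOfInjective H.subtype H.subtype_injective
    haveI : Finite ↥K := Finite.of_equiv _ eK.toEquiv
    have hK'top : K' ≠ ⊤ := hK'coatom.1
    have hcardK : Nat.card ↥K < N + 1 := by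
      rw [← Nat.card_congr eK.toEquiv]
      have h1 : Nat.card ↥K' ≤ Nat.card ↥H := Subgroup.card_le_card_group K'
      have h2 : Nat.card ↥K' ≠ Nat.card ↥H := fun h => hK'top (Subgroup.eq_top_of_card_eq K' h)
      omega
    have hpK' : IsPGroup p K' := (hpH.of_equiv Subgroup.topEquiv.symm).to_le le_top
    have hpK : IsPGroup p K := hpK'.map H.subtype
    obtain ⟨v₁, hv₁⟩ := ih K inferInstance (by omega) hpK
    set S : Set V := {v | ∀ x ∈ K, x • v = v} with hSdef
    have hSne : S.Nonempty := ⟨v₁, hv₁⟩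
    have hSconv : ∀ ⦃u v : V⦄, u ∈ S → v ∈ S → ∀ (r : T.Walk u v), r.IsPath →
        ∀ i, r.getVert i ∈ S := by
      intro u v hu hv r hr i x hx
      exact smul_getVert_eq hT hact (hu x hx) (hv x hx) r hr i
    obtain ⟨th, hthH, hthK⟩ : ∃ x, x ∈ H ∧ x ∉ K :=
      SetLike.exists_of_lt (lt_of_le_of_ne hKH (fun h => by
        apply hK'top
        have : Nat.card ↥K' = Nat.card ↥H := by
          rw [Nat.card_congr eK.toEquiv, h]
        exact Subgroup.eq_top_of_card_eq K' this))
    set t' : ↥H := ⟨th, hthH⟩ with ht'def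
    have htS : ∀ v ∈ S, th • v ∈ S := by
      intro v hv x hx
      obtain ⟨k', hk', rfl⟩ := hx
      have hconj : t'⁻¹ * k' * t' ∈ K' := by
        have := hK'norm.conj_mem k' hk' t'⁻¹
        simpa using this
      have hfix : ((t'⁻¹ * k' * t' : ↥H) : G) • v = v := hv _ ⟨_, hconj, rfl⟩
      have key : ((k' : ↥H) : G) * th = th * ((t'⁻¹ * k' * t' : ↥H) : G) := by
        have hc : ((t'⁻¹ * k' * t' : ↥H) : G) = th⁻¹ * (k' : G) * th := by
          simp [ht'def]
        rw [hc]; group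
      show ((k' : ↥H) : G) • th • v = th • v
      calc ((k' : ↥H) : G) • th • v = (((k' : ↥H) : G) * th) • v := (mul_smul _ _ _).symm
        _ = (th * ((t'⁻¹ * k' * t' : ↥H) : G)) • v := by rw [key]
        _ = th • (((t'⁻¹ * k' * t' : ↥H) : G) • v) := mul_smul _ _ _
        _ = th • v := by rw [hfix]
    have htn : th ^ Nat.card ↥H = 1 := by
      have : t' ^ Nat.card ↥H = 1 := pow_card_eq_one'
      calc th ^ Nat.card ↥H = ((t' ^ Nat.card ↥H : ↥H) : G) := by
            rw [ht'def]; push_cast; rfl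
        _ = 1 := by rw [this]; rfl
    obtain ⟨v₂, hv₂S, hv₂t⟩ := exists_smul_fixed hT hact hnoinv S hSne hSconv th htS
      (Nat.card_pos (α := ↥H)).ne' htn
    refine ⟨v₂, ?_⟩
    have htop : K' ⊔ Subgroup.zpowers t' = ⊤ := by
      refine hK'coatom.2 _ (lt_of_le_of_ne le_sup_left (fun h => hthK ?_))
      have ht'K' : t' ∈ K' := h ▸ Subgroup.mem_sup_right (Subgroup.mem_zpowers t')
      exact ⟨t', ht'K', rfl⟩
    have hsub : K' ⊔ Subgroup.zpowers t' ≤ (MulAction.stabilizer G v₂).comap H.subtype := by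
      apply sup_le
      · intro k hk
        simp only [Subgroup.mem_comap, MulAction.mem_stabilizer_iff]
        exact hv₂S _ ⟨k, hk, rfl⟩
      · rw [Subgroup.zpowers_le]
        simp only [Subgroup.mem_comap, MulAction.mem_stabilizer_iff]
        exact hv₂t
    intro x hxH
    have hmem : (⟨x, hxH⟩ : ↥H) ∈ K' ⊔ Subgroup.zpowers t' := htop ▸ Subgroup.mem_top _
    have := hsub hmem
    simpa [Subgroup.mem_comap, MulAction.mem_stabilizer_iff, Subgroup.mem_subgroupOf] using this

theorem conj_toward (hT : T.IsTree)
    (hfin : ∀ v : V, Finite (MulAction.stabilizer G v))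
    (p : ℕ) [Fact p.Prime] (vstar : V)
    (hH : ∀ v : V, v ≠ vstar → ∃ w : V, T.Adj v w ∧ T.dist w vstar + 1 = T.dist v vstar ∧
      ¬ p ∣ (MulAction.stabilizer G w).relIndex (MulAction.stabilizer G v)) :
    ∀ (n : ℕ) (v : V), T.dist v vstar = n → ∀ P : Subgroup G, Finite P → IsPGroup p P →
      P ≤ MulAction.stabilizer G v →
      ∃ g : G, ∀ x ∈ P, g⁻¹ * x * g ∈ MulAction.stabilizer G vstar := by
  intro n
  induction n with
  | zero =>
    intro v hv P _ _ hPle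
    obtain rfl : v = vstar := (hT.isConnected.dist_eq_zero_iff).mp hv
    exact ⟨1, fun x hx => by simpa using hPle hx⟩
  | succ n ih =>
    intro v hv P hPF hPp hPle
    haveI := hPF
    have hne : v ≠ vstar := by
      rintro rfl
      rw [SimpleGraph.dist_self] at hv
      omega
    obtain ⟨w, hadj, hwd, hpdvd⟩ := hH v hne
    have hwdist : T.dist w vstar = n := by omega
    haveI : Finite (MulAction.stabilizer G v) := hfin v
    set Kv := MulAction.stabilizer G v with hKv
    set M : Subgroup ↥Kv := (MulAction.stabilizer G w).subgroupOf Kv with hM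
    letI : MulAction ↥P (↥Kv ⧸ M) := MulAction.compHom _ (Subgroup.inclusion hPle)
    have hcard : ¬ p ∣ Nat.card (↥Kv ⧸ M) := by
      rw [← Subgroup.index_eq_card]
      exact hpdvd
    obtain ⟨qbar, hqbar⟩ := (hPp : IsPGroup p ↥P).nonempty_fixed_point_of_prime_not_dvd_card
      (↥Kv ⧸ M) hcard
    obtain ⟨k, rfl⟩ := QuotientGroup.mk_surjective qbar
    have hk : ∀ x : ↥P, k⁻¹ * (Subgroup.inclusion hPle x) * k ∈ M := by
      intro x
      have h1 : (x⁻¹ : ↥P) • (QuotientGroup.mk k : ↥Kv ⧸ M) = QuotientGroup.mk k := hqbar x⁻¹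
      have h2 : ((Subgroup.inclusion hPle x)⁻¹ • (QuotientGroup.mk k : ↥Kv ⧸ M))
          = QuotientGroup.mk k := by
        rw [← map_inv]
        exact h1
      rw [MulAction.Quotient.smul_mk, QuotientGroup.eq] at h2
      simpa [smul_eq_mul, mul_inv_rev, mul_assoc] using h2
    have hc : ∀ x (hx : x ∈ P), ((k : G))⁻¹ * x * (k : G) ∈ MulAction.stabilizer G w := by
      intro x hx
      have h3 := hk ⟨x, hx⟩
      rw [hM, Subgroup.mem_subgroupOf] at h3
      simpa using h3
    set c : G := (k : G) with hcdef
    set P₂ := P.map (MulAut.conj c⁻¹).toMonoidHom with hP₂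
    have hmem₂ : ∀ x ∈ P, c⁻¹ * x * c ∈ P₂ := by
      intro x hx
      refine ⟨x, hx, ?_⟩
      simp [MulAut.conj_apply]
    have hP₂le : P₂ ≤ MulAction.stabilizer G w := by
      rintro y ⟨x, hx, rfl⟩
      have := hc x hx
      simpa [MulAut.conj_apply] using this
    haveI : Finite ↥P₂ := by
      have e := P.equivMapOfInjective (MulAut.conj c⁻¹).toMonoidHom
        (MulAut.conj c⁻¹).injective
      exact Finite.of_equiv _ e.toEquiv
    have hP₂p : IsPGroup p P₂ := hPp.map _
    obtain ⟨h, hh⟩ := ih w hwdist P₂ inferInstance hP₂p hP₂le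
    refine ⟨c * h, fun x hx => ?_⟩
    have := hh _ (hmem₂ x hx)
    have heq : (c * h)⁻¹ * x * (c * h) = h⁻¹ * (c⁻¹ * x * c) * h := by group
    rw [heq]
    exact this

end Stmt3Aux

/-- Let `G` be a group acting simplicially and without inversions on a
tree `T`, with all vertex stabilizers finite, and suppose there is a vertex `v⋆` such
that for every vertex `v ≠ v⋆`, the edge group of the first edge `(v, w)` on the path
from `v` toward `v⋆` (the stabilizer of the edge, i.e. `Stab(v) ⊓ Stab(w)`) has
`p'`-index in `Stab(v)` — the setting of a tree of finite groups satisfying hypothesis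
`(H)`, acting on its Bass–Serre tree.  Then every finite `p`-subgroup `P` of `G` has a
conjugate inside `Stab(v⋆)`; consequently (the image of) any Sylow `p`-subgroup of
`Stab(v⋆)` is a Sylow `p`-subgroup of `G`: every finite `p`-subgroup of `G` is conjugate
into it. -/
theorem stmt_3 {V : Type*} (T : SimpleGraph V) (hT : T.IsTree)
    (G : Type*) [Group G] [MulAction G V]
    (hact : ∀ (g : G) (u v : V), T.Adj u v → T.Adj (g • u) (g • v))
    (hnoinv : ∀ (g : G) (u v : V), T.Adj u v → g • u = v → g • v ≠ u)
    (hfin : ∀ v : V, Finite (MulAction.stabilizer G v))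
    (p : ℕ) [Fact p.Prime] (vstar : V)
    (hH : ∀ v : V, v ≠ vstar → ∃ w : V, T.Adj v w ∧ T.dist w vstar + 1 = T.dist v vstar ∧
      ¬ p ∣ (MulAction.stabilizer G w).relIndex (MulAction.stabilizer G v)) :
    (∀ P : Subgroup G, Finite P → IsPGroup p P →
      ∃ g : G, ∀ x ∈ P, g⁻¹ * x * g ∈ MulAction.stabilizer G vstar) ∧
    (∀ S : Sylow p ↥(MulAction.stabilizer G vstar),
      ∀ P : Subgroup G, Finite P → IsPGroup p P →
        ∃ g : G, ∀ x ∈ P, g⁻¹ * x * g ∈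
          (S : Subgroup ↥(MulAction.stabilizer G vstar)).map
            (MulAction.stabilizer G vstar).subtype) := by
  have part1 : ∀ P : Subgroup G, Finite P → IsPGroup p P →
      ∃ g : G, ∀ x ∈ P, g⁻¹ * x * g ∈ MulAction.stabilizer G vstar := by
    intro P hPF hPp
    obtain ⟨v, hvfix⟩ := Stmt3Aux.exists_fixed_vertex hT hact hnoinv vstar p
      (Nat.card P) P hPF le_rfl hPp
    exact Stmt3Aux.conj_toward hT hfin p vstar hH (T.dist v vstar) v rfl P hPF hPp
      (fun x hx => by rw [MulAction.mem_stabilizer_iff]; exact hvfix x hx)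
  refine ⟨part1, ?_⟩
  intro S P hPF hPp
  obtain ⟨g₁, hg₁⟩ := part1 P hPF hPp
  haveI : Finite (MulAction.stabilizer G vstar) := hfin vstar
  set P₁ := P.map (MulAut.conj g₁⁻¹).toMonoidHom with hP₁
  have hP₁le : P₁ ≤ (MulAction.stabilizer G vstar) := by
    rintro y ⟨x, hx, rfl⟩
    simpa [MulAut.conj_apply] using hg₁ x hx
  haveI : Finite ↥P₁ := by
    haveI := hPF
    exact Finite.of_equiv _
      (P.equivMapOfInjective _ (MulAut.conj g₁⁻¹).injective).toEquiv
  have hP₁p : IsPGroup p P₁ := hPp.map _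
  letI : MulAction ↥P₁ (↥(MulAction.stabilizer G vstar) ⧸ (S : Subgroup ↥(MulAction.stabilizer G vstar))) :=
    MulAction.compHom _ (Subgroup.inclusion hP₁le)
  haveI : Finite (Subgroup ↥(MulAction.stabilizer G vstar)) :=
    Finite.of_injective (fun L : Subgroup ↥(MulAction.stabilizer G vstar) => (L : Set ↥(MulAction.stabilizer G vstar))) SetLike.coe_injective
  haveI : Finite (Sylow p ↥(MulAction.stabilizer G vstar)) :=
    Finite.of_injective (fun s : Sylow p ↥(MulAction.stabilizer G vstar) => (s : Subgroup ↥(MulAction.stabilizer G vstar)))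
      (fun s₁ s₂ h => Sylow.ext h)
  haveI : (S : Subgroup ↥(MulAction.stabilizer G vstar)).FiniteIndex :=
    ⟨by rw [Subgroup.index_eq_card]; exact Nat.card_pos.ne'⟩
  have hcard : ¬ p ∣ Nat.card (↥(MulAction.stabilizer G vstar) ⧸ (S : Subgroup ↥(MulAction.stabilizer G vstar))) := by
    rw [← Subgroup.index_eq_card]
    exact S.not_dvd_index
  obtain ⟨qbar, hqbar⟩ := (hP₁p : IsPGroup p ↥P₁).nonempty_fixed_point_of_prime_not_dvd_card
    (↥(MulAction.stabilizer G vstar) ⧸ (S : Subgroup ↥(MulAction.stabilizer G vstar))) hcard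
  obtain ⟨k, rfl⟩ := QuotientGroup.mk_surjective qbar
  have hk : ∀ x : ↥P₁, k⁻¹ * (Subgroup.inclusion hP₁le x) * k ∈ (S : Subgroup ↥(MulAction.stabilizer G vstar)) := by
    intro x
    have h1 : (x⁻¹ : ↥P₁) • (QuotientGroup.mk k : ↥(MulAction.stabilizer G vstar) ⧸ (S : Subgroup ↥(MulAction.stabilizer G vstar))) = QuotientGroup.mk k :=
      hqbar x⁻¹
    have h2 : ((Subgroup.inclusion hP₁le x)⁻¹ • (QuotientGroup.mk k : ↥(MulAction.stabilizer G vstar) ⧸ (S : Subgroup ↥(MulAction.stabilizer G vstar))))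
        = QuotientGroup.mk k := by
      rw [← map_inv]
      exact h1
    rw [MulAction.Quotient.smul_mk, QuotientGroup.eq] at h2
    simpa [smul_eq_mul, mul_inv_rev, mul_assoc] using h2
  refine ⟨g₁ * (k : G), fun x hx => ?_⟩
  have hx1 : g₁⁻¹ * x * g₁ ∈ P₁ := ⟨x, hx, by simp [MulAut.conj_apply]⟩
  have hy := hk ⟨g₁⁻¹ * x * g₁, hx1⟩
  refine Subgroup.mem_map.mpr ⟨k⁻¹ * (Subgroup.inclusion hP₁le ⟨g₁⁻¹ * x * g₁, hx1⟩) * k,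
    (by exact hy : _), ?_⟩
  have hcoe : ((Subgroup.inclusion hP₁le ⟨g₁⁻¹ * x * g₁, hx1⟩ : ↥(MulAction.stabilizer G vstar)) : G) = g₁⁻¹ * x * g₁ := rfl
  show ((k⁻¹ * (Subgroup.inclusion hP₁le ⟨g₁⁻¹ * x * g₁, hx1⟩) * k : ↥(MulAction.stabilizer G vstar)) : G)
      = (g₁ * (k : G))⁻¹ * x * (g₁ * (k : G))
  push_cast [hcoe]
  group
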